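/- arXiv:1805.07299 — 3 statements merged into one kernel-verified Lean document; each statement's English description precedes it below -/
import Mathlib

section
/- The set 𝔩 of real n×n traceless matrices all of whose row sums and column sums equal zero is a Lie subalgebra of gl(n,ℝ) (it is a linear subspace closed under the commutator [A,B] = AB − BA), and it equals the linear span of the matrices A_{ij} (1 ≤ i,j ≤ n−1, i ≠ j) together with the matrices H_k (1 ≤ k ≤ n−2). -/
open Matrix Finset

attribute [local instance 100] LieRing.ofAssociativeRing

/-- The set `𝔩` of real traceless `n×n` matrices with all row and column sums
zero is a Lie subalgebra of `gl(n,ℝ)`, and it equals the linear span of the matrices `Aᵢⱼ`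
(`1 ≤ i,j ≤ n−1`, `i ≠ j`) together with the matrices `Hₖ` (`1 ≤ k ≤ n−2`). -/
theorem stmt7 (n : ℕ) (hn : 2 ≤ n)
    (v : ℕ → Fin n → ℝ)
    (hv0 : ∀ k, v 0 k = 1 / Real.sqrt n)
    (horth : ∀ i, i < n → ∀ j, j < n → (∑ k, v i k * v j k) = if i = j then (1 : ℝ) else 0)
    (hplane : ∀ i, 1 ≤ i → i < n → (∑ k, v i k) = 0)
    (γ : ℕ → ℕ → ℝ)
    (hγorth : ∀ k, 1 ≤ k → k ≤ n - 2 → ∀ l, 1 ≤ l → l ≤ n - 2 →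
      (∑ m ∈ Finset.Ico 1 n, γ k m * γ l m) = if k = l then (1 : ℝ) else 0)
    (hγsum : ∀ k, 1 ≤ k → k ≤ n - 2 → (∑ m ∈ Finset.Ico 1 n, γ k m) = 0)
    (A : ℕ → ℕ → Matrix (Fin n) (Fin n) ℝ)
    (hA : ∀ i j, A i j = Matrix.vecMulVec (v i) (v j))
    (H : ℕ → Matrix (Fin n) (Fin n) ℝ)
    (hH : ∀ k, H k = ∑ l ∈ Finset.Ico 1 n, γ k l • Matrix.vecMulVec (v l) (v l)) :
    ∃ L : LieSubalgebra ℝ (Matrix (Fin n) (Fin n) ℝ),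
      (L : Set (Matrix (Fin n) (Fin n) ℝ)) =
        {M | M.trace = 0 ∧ (∀ i, (∑ j, M i j) = 0) ∧ (∀ j, (∑ i, M i j) = 0)} ∧
      L.toSubmodule = Submodule.span ℝ
        ({M | ∃ i j, 1 ≤ i ∧ i < n ∧ 1 ≤ j ∧ j < n ∧ i ≠ j ∧ M = A i j} ∪
         {M | ∃ k, 1 ≤ k ∧ k ≤ n - 2 ∧ M = H k}) := by
  classical
  set S : Set (Matrix (Fin n) (Fin n) ℝ) :=
    {M | M.trace = 0 ∧ (∀ i, (∑ j, M i j) = 0) ∧ (∀ j, (∑ i, M i j) = 0)} with hSdef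
  -- closure of the row/column sum conditions under multiplication
  have hmulr : ∀ x : Matrix (Fin n) (Fin n) ℝ, ∀ y ∈ S, ∀ i, (∑ j, (x * y) i j) = 0 := by
    rintro x y ⟨-, hyr, -⟩ i
    have : ∑ j, (x * y) i j = ∑ k, x i k * (∑ j, y k j) := by
      simp [Matrix.mul_apply, Finset.mul_sum]; exact Finset.sum_comm
    simp [this, hyr]
  have hmulc : ∀ x ∈ S, ∀ y : Matrix (Fin n) (Fin n) ℝ, ∀ j, (∑ i, (x * y) i j) = 0 := by
    rintro x ⟨-, -, hxc⟩ y j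
    have : ∑ i, (x * y) i j = ∑ k, (∑ i, x i k) * y k j := by
      simp [Matrix.mul_apply, Finset.sum_mul]; exact Finset.sum_comm
    simp [this, hxc]
  let P : Submodule ℝ (Matrix (Fin n) (Fin n) ℝ) :=
    { carrier := S
      add_mem' := by
        rintro x y ⟨hxt, hxr, hxc⟩ ⟨hyt, hyr, hyc⟩
        exact ⟨by simp [Matrix.trace_add, hxt, hyt],
          fun i => by simp [Finset.sum_add_distrib, hxr i, hyr i],
          fun j => by simp [Finset.sum_add_distrib, hxc j, hyc j]⟩
      zero_mem' := ⟨by simp, by simp, by simp⟩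
      smul_mem' := by
        rintro c x ⟨hxt, hxr, hxc⟩
        exact ⟨by simp [hxt], fun i => by simp [← Finset.mul_sum, hxr i],
          fun j => by simp [← Finset.mul_sum, hxc j]⟩ }
  let L : LieSubalgebra ℝ (Matrix (Fin n) (Fin n) ℝ) :=
    { toSubmodule := P
      lie_mem' := by
        intro x y hx hy
        show ⁅x, y⁆ ∈ S
        rw [Ring.lie_def]
        refine ⟨?_, ?_, ?_⟩
        · rw [Matrix.trace_sub, Matrix.trace_mul_comm, sub_self]
        · intro i
          simp only [Matrix.sub_apply, Finset.sum_sub_distrib,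
            hmulr x y hy i, hmulr y x hx i, sub_self]
        · intro j
          simp only [Matrix.sub_apply, Finset.sum_sub_distrib,
            hmulc x hx y j, hmulc y hy x j, sub_self] }
  refine ⟨L, rfl, ?_⟩
  -- completeness of the v basis
  have hvcomp : ∀ a b : Fin n, (∑ i ∈ range n, v i a * v i b) = if a = b then (1:ℝ) else 0 := by
    have hVVt : (Matrix.of (fun i k : Fin n => v i.val k)) *
        (Matrix.of (fun i k : Fin n => v i.val k))ᵀ = 1 := by
      ext i j
      simp only [Matrix.mul_apply, Matrix.transpose_apply, Matrix.of_apply, Matrix.one_apply]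
      rw [horth i.val i.isLt j.val j.isLt]
      simp [Fin.ext_iff]
    have hVtV := mul_eq_one_comm.mp hVVt
    intro a b
    have h := congrArg (fun X => X a b) hVtV
    simp only [Matrix.mul_apply, Matrix.transpose_apply, Matrix.of_apply, Matrix.one_apply] at h
    rw [← Fin.sum_univ_eq_sum_range (fun i => v i a * v i b) n]
    exact h
  -- completeness of the γ system
  have hγcomp : ∀ m ∈ Finset.Ico 1 n, ∀ m' ∈ Finset.Ico 1 n,
      (∑ k ∈ Finset.Icc 1 (n-2), γ k m * γ k m') =
        (if m = m' then (1:ℝ) else 0) - ((n - 1 : ℕ) : ℝ)⁻¹ := by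
    set r := n - 1 with hr
    have hrn : (r : ℝ) ≠ 0 := by
      simpa using (Nat.cast_pos (α := ℝ) |>.mpr (by omega : 0 < r)).ne'
    have hrnn : (0:ℝ) ≤ (r:ℝ) := Nat.cast_nonneg r
    have hsq : (Real.sqrt r)⁻¹ * (Real.sqrt r)⁻¹ = ((r:ℕ):ℝ)⁻¹ := by
      rw [← mul_inv, Real.mul_self_sqrt hrnn]
    have hreix : ∀ f : ℕ → ℝ, (∑ m : Fin r, f (m.val + 1)) = ∑ m ∈ Finset.Ico 1 n, f m := by
      intro f
      rw [Fin.sum_univ_eq_sum_range (fun i => f (i + 1)) r, Finset.sum_Ico_eq_sum_range]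
      exact Finset.sum_congr rfl fun i _ => by rw [add_comm]
    have hIcc : Finset.Icc 1 (n-2) = Finset.Ico 1 r := by
      rw [← Finset.Ico_add_one_right_eq_Icc]; congr 1; omega
    set Γ : Matrix (Fin r) (Fin r) ℝ :=
      Matrix.of (fun k m : Fin r => if k.val = 0 then (Real.sqrt r)⁻¹ else γ k.val (m.val + 1)) with hΓ
    have hΓ1 : Γ * Γᵀ = 1 := by
      ext k l
      simp only [Matrix.mul_apply, Matrix.transpose_apply, hΓ, Matrix.of_apply, Matrix.one_apply]
      by_cases hk : k.val = 0 <;> by_cases hl : l.val = 0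
      · have hkl : k = l := Fin.ext (by omega)
        rw [if_pos hkl]
        calc ∑ x : Fin r, (if (k:ℕ) = 0 then (Real.sqrt r)⁻¹ else γ k.val (x.val+1)) *
                (if (l:ℕ) = 0 then (Real.sqrt r)⁻¹ else γ l.val (x.val+1))
            = ∑ _x : Fin r, (Real.sqrt r)⁻¹ * (Real.sqrt r)⁻¹ :=
              Finset.sum_congr rfl fun x _ => by rw [if_pos hk, if_pos hl]
          _ = r * ((r:ℕ):ℝ)⁻¹ := by
              rw [Finset.sum_const, Finset.card_univ, Fintype.card_fin, nsmul_eq_mul, hsq]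
          _ = 1 := mul_inv_cancel₀ hrn
      · have hkl : k ≠ l := fun h => hl (h ▸ hk)
        rw [if_neg hkl]
        calc ∑ x : Fin r, (if (k:ℕ) = 0 then (Real.sqrt r)⁻¹ else γ k.val (x.val+1)) *
                (if (l:ℕ) = 0 then (Real.sqrt r)⁻¹ else γ l.val (x.val+1))
            = ∑ x : Fin r, (Real.sqrt r)⁻¹ * γ l.val (x.val+1) :=
              Finset.sum_congr rfl fun x _ => by rw [if_pos hk, if_neg hl]
          _ = ∑ m ∈ Finset.Ico 1 n, (Real.sqrt r)⁻¹ * γ l.val m :=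
              hreix (fun m => (Real.sqrt r)⁻¹ * γ l.val m)
          _ = (Real.sqrt r)⁻¹ * ∑ m ∈ Finset.Ico 1 n, γ l.val m := (Finset.mul_sum _ _ _).symm
          _ = 0 := by rw [hγsum l.val (by omega) (by omega), mul_zero]
      · have hkl : k ≠ l := fun h => hk (h ▸ hl)
        rw [if_neg hkl]
        calc ∑ x : Fin r, (if (k:ℕ) = 0 then (Real.sqrt r)⁻¹ else γ k.val (x.val+1)) *
                (if (l:ℕ) = 0 then (Real.sqrt r)⁻¹ else γ l.val (x.val+1))
            = ∑ x : Fin r, (Real.sqrt r)⁻¹ * γ k.val (x.val+1) :=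
              Finset.sum_congr rfl fun x _ => by rw [if_neg hk, if_pos hl, mul_comm]
          _ = ∑ m ∈ Finset.Ico 1 n, (Real.sqrt r)⁻¹ * γ k.val m :=
              hreix (fun m => (Real.sqrt r)⁻¹ * γ k.val m)
          _ = (Real.sqrt r)⁻¹ * ∑ m ∈ Finset.Ico 1 n, γ k.val m := (Finset.mul_sum _ _ _).symm
          _ = 0 := by rw [hγsum k.val (by omega) (by omega), mul_zero]
      · calc ∑ x : Fin r, (if (k:ℕ) = 0 then (Real.sqrt r)⁻¹ else γ k.val (x.val+1)) *
                (if (l:ℕ) = 0 then (Real.sqrt r)⁻¹ else γ l.val (x.val+1))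
            = ∑ x : Fin r, γ k.val (x.val+1) * γ l.val (x.val+1) :=
              Finset.sum_congr rfl fun x _ => by rw [if_neg hk, if_neg hl]
          _ = ∑ m ∈ Finset.Ico 1 n, γ k.val m * γ l.val m :=
              hreix (fun m => γ k.val m * γ l.val m)
          _ = if k.val = l.val then (1:ℝ) else 0 :=
              hγorth k.val (by omega) (by omega) l.val (by omega) (by omega)
          _ = if k = l then (1:ℝ) else 0 := by simp [Fin.ext_iff]
    have hΓ2 := mul_eq_one_comm.mp hΓ1
    have key : ∀ m m' : Fin r,
        (((r:ℕ):ℝ)⁻¹ + ∑ k ∈ Finset.Ico 1 r, γ k (m.val+1) * γ k (m'.val+1)) =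
          if m = m' then (1:ℝ) else 0 := by
      intro m m'
      have h := congrArg (fun X => X m m') hΓ2
      simp only [Matrix.mul_apply, Matrix.transpose_apply, hΓ, Matrix.of_apply,
        Matrix.one_apply] at h
      rw [← h]
      rw [Fin.sum_univ_eq_sum_range
        (fun k => (if k = 0 then (Real.sqrt r)⁻¹ else γ k (m.val+1)) *
          (if k = 0 then (Real.sqrt r)⁻¹ else γ k (m'.val+1))) r]
      rw [Finset.range_eq_Ico, Finset.sum_eq_sum_Ico_succ_bot (by omega : 0 < r)]
      rw [if_pos rfl, if_pos rfl, hsq]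
      congr 1
      exact Finset.sum_congr rfl fun k hk => by
        rw [if_neg (by simp at hk; omega), if_neg (by simp at hk; omega)]
    intro m hm m' hm'
    simp only [Finset.mem_Ico] at hm hm'
    have h1 : m - 1 < r := by omega
    have h2 : m' - 1 < r := by omega
    have hkey := key ⟨m-1, h1⟩ ⟨m'-1, h2⟩
    simp only [Fin.mk.injEq] at hkey
    have e1 : m - 1 + 1 = m := by omega
    have e2 : m' - 1 + 1 = m' := by omega
    rw [e1, e2] at hkey
    have hif : (if m - 1 = m' - 1 then (1:ℝ) else 0) = if m = m' then (1:ℝ) else 0 := by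
      congr 1; simp only [eq_iff_iff]; omega
    rw [hif] at hkey
    rw [hIcc]
    linarith [hkey]
  -- generators are in S
  have htrB : ∀ i j : ℕ, (Matrix.vecMulVec (v i) (v j)).trace = ∑ k, v i k * v j k := by
    intro i j
    simp [Matrix.trace, Matrix.diag, Matrix.vecMulVec_apply]
  have hrowB : ∀ i j : ℕ, j < n → 1 ≤ j → ∀ a : Fin n,
      (∑ b, Matrix.vecMulVec (v i) (v j) a b) = 0 := by
    intro i j hjn hj1 a
    simp only [Matrix.vecMulVec_apply]
    rw [← Finset.mul_sum, hplane j hj1 hjn, mul_zero]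
  have hcolB : ∀ i j : ℕ, i < n → 1 ≤ i → ∀ b : Fin n,
      (∑ a, Matrix.vecMulVec (v i) (v j) a b) = 0 := by
    intro i j hin hi1 b
    simp only [Matrix.vecMulVec_apply]
    rw [← Finset.sum_mul, hplane i hi1 hin, zero_mul]
  have hgenA : ∀ i j : ℕ, 1 ≤ i → i < n → 1 ≤ j → j < n → i ≠ j → A i j ∈ S := by
    intro i j hi1 hin hj1 hjn hij
    rw [hA]
    exact ⟨by rw [htrB, horth i hin j hjn, if_neg hij],
      fun a => hrowB i j hjn hj1 a, fun b => hcolB i j hin hi1 b⟩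
  have hgenH : ∀ k : ℕ, 1 ≤ k → k ≤ n - 2 → H k ∈ S := by
    intro k hk1 hk2
    rw [hH]
    refine ⟨?_, ?_, ?_⟩
    · rw [Matrix.trace_sum]
      have : ∀ l ∈ Finset.Ico 1 n, (γ k l • Matrix.vecMulVec (v l) (v l)).trace = γ k l := by
        intro l hl
        simp only [Finset.mem_Ico] at hl
        rw [Matrix.trace_smul, htrB, horth l hl.2 l hl.2, if_pos rfl, smul_eq_mul, mul_one]
      rw [Finset.sum_congr rfl this, hγsum k hk1 hk2]
    · intro a
      rw [show (∑ b, (∑ l ∈ Finset.Ico 1 n, γ k l • Matrix.vecMulVec (v l) (v l)) a b)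
          = ∑ l ∈ Finset.Ico 1 n, γ k l * ∑ b, Matrix.vecMulVec (v l) (v l) a b from by
        simp only [Matrix.sum_apply, Matrix.smul_apply, smul_eq_mul, Finset.mul_sum]
        exact Finset.sum_comm]
      refine Finset.sum_eq_zero fun l hl => ?_
      simp only [Finset.mem_Ico] at hl
      rw [hrowB l l hl.2 hl.1, mul_zero]
    · intro b
      rw [show (∑ a, (∑ l ∈ Finset.Ico 1 n, γ k l • Matrix.vecMulVec (v l) (v l)) a b)
          = ∑ l ∈ Finset.Ico 1 n, γ k l * ∑ a, Matrix.vecMulVec (v l) (v l) a b from by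
        simp only [Matrix.sum_apply, Matrix.smul_apply, smul_eq_mul, Finset.mul_sum]
        exact Finset.sum_comm]
      refine Finset.sum_eq_zero fun l hl => ?_
      simp only [Finset.mem_Ico] at hl
      rw [hcolB l l hl.2 hl.1, mul_zero]
  -- the two inclusions
  apply le_antisymm
  · -- P ≤ span
    intro M hM
    obtain ⟨hMt, hMr, hMc⟩ : M ∈ S := hM
    set G : Set (Matrix (Fin n) (Fin n) ℝ) :=
      ({M | ∃ i j, 1 ≤ i ∧ i < n ∧ 1 ≤ j ∧ j < n ∧ i ≠ j ∧ M = A i j} ∪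
       {M | ∃ k, 1 ≤ k ∧ k ≤ n - 2 ∧ M = H k}) with hG
    show M ∈ Submodule.span ℝ G
    set c : ℕ → ℕ → ℝ := fun i j => ∑ a, ∑ b, v i a * M a b * v j b with hc
    -- full decomposition
    have hdec : M = ∑ i ∈ range n, ∑ j ∈ range n, c i j • Matrix.vecMulVec (v i) (v j) := by
      ext a b
      simp only [Matrix.sum_apply, Matrix.smul_apply, Matrix.vecMulVec_apply, smul_eq_mul, hc]
      calc M a b
          = ∑ p, ∑ q, (∑ i ∈ range n, v i p * v i a) *
              ((∑ j ∈ range n, v j q * v j b) * M p q) := by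
            simp only [hvcomp]
            simp [Finset.sum_ite_eq', ite_mul, Finset.mul_sum]
        _ = ∑ p, ∑ q, ∑ i ∈ range n, ∑ j ∈ range n,
              (v i p * v i a) * ((v j q * v j b) * M p q) := by
            refine Finset.sum_congr rfl fun p _ => Finset.sum_congr rfl fun q _ => ?_
            rw [Finset.sum_mul]
            refine Finset.sum_congr rfl fun i _ => ?_
            rw [Finset.sum_mul, Finset.mul_sum]
        _ = ∑ p, ∑ i ∈ range n, ∑ q, ∑ j ∈ range n,
              (v i p * v i a) * ((v j q * v j b) * M p q) :=
            Finset.sum_congr rfl fun p _ => Finset.sum_comm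
        _ = ∑ i ∈ range n, ∑ p, ∑ q, ∑ j ∈ range n,
              (v i p * v i a) * ((v j q * v j b) * M p q) :=
            Finset.sum_comm
        _ = ∑ i ∈ range n, ∑ p, ∑ j ∈ range n, ∑ q,
              (v i p * v i a) * ((v j q * v j b) * M p q) :=
            Finset.sum_congr rfl fun i _ => Finset.sum_congr rfl fun p _ => Finset.sum_comm
        _ = ∑ i ∈ range n, ∑ j ∈ range n, ∑ p, ∑ q,
              (v i p * v i a) * ((v j q * v j b) * M p q) :=
            Finset.sum_congr rfl fun i _ => Finset.sum_comm
        _ = ∑ i ∈ range n, ∑ j ∈ range n,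
              (∑ p, ∑ q, v i p * M p q * v j q) * (v i a * v j b) := by
            refine Finset.sum_congr rfl fun i _ => Finset.sum_congr rfl fun j _ => ?_
            rw [Finset.sum_mul]
            refine Finset.sum_congr rfl fun p _ => ?_
            rw [Finset.sum_mul]
            exact Finset.sum_congr rfl fun q _ => by ring
    -- coefficients with index 0 vanish
    have hc0l : ∀ j, c 0 j = 0 := by
      intro j
      show (∑ a : Fin n, ∑ b : Fin n, v 0 a * M a b * v j b) = 0
      rw [Finset.sum_comm]
      calc ∑ b : Fin n, ∑ a : Fin n, v 0 a * M a b * v j b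
          = ∑ b : Fin n, (1 / Real.sqrt n * v j b) * ∑ a, M a b := by
            refine Finset.sum_congr rfl fun b _ => ?_
            rw [Finset.mul_sum]
            exact Finset.sum_congr rfl fun a _ => by rw [hv0]; ring
        _ = 0 := by simp [hMc]
    have hcr0 : ∀ i, c i 0 = 0 := by
      intro i
      show (∑ a : Fin n, ∑ b : Fin n, v i a * M a b * v 0 b) = 0
      calc ∑ a : Fin n, ∑ b : Fin n, v i a * M a b * v 0 b
          = ∑ a : Fin n, (v i a * (1 / Real.sqrt n)) * ∑ b, M a b := by
            refine Finset.sum_congr rfl fun a _ => ?_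
            rw [Finset.mul_sum]
            exact Finset.sum_congr rfl fun b _ => by rw [hv0]; ring
        _ = 0 := by simp [hMr]
    -- restrict the decomposition to indices ≥ 1
    have hdec1 : M = ∑ i ∈ Finset.Ico 1 n, ∑ j ∈ Finset.Ico 1 n,
        c i j • Matrix.vecMulVec (v i) (v j) := by
      rw [hdec, Finset.range_eq_Ico, Finset.sum_eq_sum_Ico_succ_bot (by omega : 0 < n)]
      have hz : (∑ j ∈ Finset.Ico 0 n, c 0 j • Matrix.vecMulVec (v 0) (v j)) = 0 :=
        Finset.sum_eq_zero fun j _ => by rw [hc0l j, zero_smul]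
      rw [hz, zero_add]
      refine Finset.sum_congr rfl fun i _ => ?_
      rw [Finset.sum_eq_sum_Ico_succ_bot (by omega : 0 < n), hcr0 i, zero_smul, zero_add]
    -- trace of M gives the diagonal coefficient sum
    have htr1 : (∑ i ∈ Finset.Ico 1 n, c i i) = 0 := by
      have h2 : M.trace = ∑ i ∈ Finset.Ico 1 n, ∑ j ∈ Finset.Ico 1 n, c i j *
          (if i = j then (1:ℝ) else 0) := by
        rw [hdec1, Matrix.trace_sum]
        refine Finset.sum_congr rfl fun i hi => ?_
        rw [Matrix.trace_sum]
        refine Finset.sum_congr rfl fun j hj => ?_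
        simp only [Finset.mem_Ico] at hi hj
        rw [Matrix.trace_smul, htrB, horth i hi.2 j hj.2, smul_eq_mul]
      rw [hMt] at h2
      have h3 : ∀ i ∈ Finset.Ico 1 n, (∑ j ∈ Finset.Ico 1 n, c i j *
          (if i = j then (1:ℝ) else 0)) = c i i := by
        intro i hi
        rw [Finset.sum_congr rfl (fun j _ => by rw [mul_ite, mul_one, mul_zero])]
        rw [Finset.sum_ite_eq _ i (fun j => c i j), if_pos hi]
      rw [Finset.sum_congr rfl h3] at h2
      exact h2.symm
    -- split into diagonal and off-diagonal parts
    have hsplit : M = (∑ i ∈ Finset.Ico 1 n, c i i • Matrix.vecMulVec (v i) (v i)) +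
        ∑ i ∈ Finset.Ico 1 n, ∑ j ∈ (Finset.Ico 1 n).erase i,
          c i j • Matrix.vecMulVec (v i) (v j) := by
      rw [hdec1, ← Finset.sum_add_distrib]
      refine Finset.sum_congr rfl fun i hi => ?_
      rw [← Finset.add_sum_erase _ _ hi]
    rw [hsplit]
    refine Submodule.add_mem _ ?_ ?_
    · -- diagonal part is a combination of the H k
      have hdiag : (∑ i ∈ Finset.Ico 1 n, c i i • Matrix.vecMulVec (v i) (v i)) =
          ∑ k ∈ Finset.Icc 1 (n-2), (∑ m ∈ Finset.Ico 1 n, c m m * γ k m) • H k := by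
        have hcoef : ∀ m ∈ Finset.Ico 1 n,
            (∑ k ∈ Finset.Icc 1 (n-2), (∑ m' ∈ Finset.Ico 1 n, c m' m' * γ k m') * γ k m)
              = c m m := by
          intro m hm
          calc ∑ k ∈ Finset.Icc 1 (n-2), (∑ m' ∈ Finset.Ico 1 n, c m' m' * γ k m') * γ k m
              = ∑ k ∈ Finset.Icc 1 (n-2), ∑ m' ∈ Finset.Ico 1 n,
                  c m' m' * (γ k m' * γ k m) := by
                refine Finset.sum_congr rfl fun k _ => ?_
                rw [Finset.sum_mul]
                exact Finset.sum_congr rfl fun m' _ => by ring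
            _ = ∑ m' ∈ Finset.Ico 1 n, c m' m' *
                  ∑ k ∈ Finset.Icc 1 (n-2), γ k m' * γ k m := by
                rw [Finset.sum_comm]
                exact Finset.sum_congr rfl fun m' _ => by rw [Finset.mul_sum]
            _ = ∑ m' ∈ Finset.Ico 1 n, c m' m' *
                  ((if m' = m then (1:ℝ) else 0) - ((n - 1 : ℕ) : ℝ)⁻¹) := by
                exact Finset.sum_congr rfl fun m' hm' => by rw [hγcomp m' hm' m hm]
            _ = (∑ m' ∈ Finset.Ico 1 n, c m' m' * (if m' = m then (1:ℝ) else 0)) -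
                  ((n - 1 : ℕ) : ℝ)⁻¹ * ∑ m' ∈ Finset.Ico 1 n, c m' m' := by
                rw [Finset.mul_sum, ← Finset.sum_sub_distrib]
                exact Finset.sum_congr rfl fun m' _ => by ring
            _ = c m m := by
                rw [htr1, mul_zero, sub_zero]
                rw [Finset.sum_congr rfl (fun m' _ => by rw [mul_ite, mul_one, mul_zero])]
                rw [Finset.sum_ite_eq' _ m (fun m' => c m' m'), if_pos hm]
        calc ∑ i ∈ Finset.Ico 1 n, c i i • Matrix.vecMulVec (v i) (v i)
            = ∑ m ∈ Finset.Ico 1 n,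
                (∑ k ∈ Finset.Icc 1 (n-2), (∑ m' ∈ Finset.Ico 1 n, c m' m' * γ k m') * γ k m)
                  • Matrix.vecMulVec (v m) (v m) := by
              refine Finset.sum_congr rfl fun m hm => ?_
              rw [hcoef m hm]
          _ = ∑ m ∈ Finset.Ico 1 n, ∑ k ∈ Finset.Icc 1 (n-2),
                ((∑ m' ∈ Finset.Ico 1 n, c m' m' * γ k m') * γ k m)
                  • Matrix.vecMulVec (v m) (v m) :=
              Finset.sum_congr rfl fun m _ => Finset.sum_smul
          _ = ∑ k ∈ Finset.Icc 1 (n-2), ∑ m ∈ Finset.Ico 1 n,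
                ((∑ m' ∈ Finset.Ico 1 n, c m' m' * γ k m') * γ k m)
                  • Matrix.vecMulVec (v m) (v m) :=
              Finset.sum_comm
          _ = ∑ k ∈ Finset.Icc 1 (n-2), (∑ m' ∈ Finset.Ico 1 n, c m' m' * γ k m') • H k := by
              refine Finset.sum_congr rfl fun k _ => ?_
              rw [hH, Finset.smul_sum]
              exact Finset.sum_congr rfl fun m _ => by rw [smul_smul]
      rw [hdiag]
      refine Submodule.sum_mem _ fun k hk => Submodule.smul_mem _ _ (Submodule.subset_span ?_)
      simp only [Finset.mem_Icc] at hk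
      exact Or.inr ⟨k, hk.1, hk.2, rfl⟩
    · refine Submodule.sum_mem _ fun i hi => Submodule.sum_mem _ fun j hj => ?_
      refine Submodule.smul_mem _ _ (Submodule.subset_span ?_)
      simp only [Finset.mem_erase, Finset.mem_Ico] at hi hj
      exact Or.inl ⟨i, j, hi.1, hi.2, hj.2.1, hj.2.2, fun h => hj.1 (h.symm), (hA i j).symm⟩
  · -- span ≤ P
    rw [Submodule.span_le]
    rintro M (⟨i, j, hi1, hin, hj1, hjn, hij, rfl⟩ | ⟨k, hk1, hk2, rfl⟩)
    · exact hgenA i j hi1 hin hj1 hjn hij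
    · exact hgenH k hk1 hk2
end

section
/- There exist two matrices X, Y in the stochastic Lie algebra 𝔰(n,ℝ) such that the Lie subalgebra of gl(n,ℝ) generated by {X, Y} equals 𝔰(n,ℝ); that is, 𝔰(n,ℝ) is generated as a Lie algebra by two elements. -/
open Matrix Finset

attribute [local instance] LieRing.ofAssociativeRing

/-- The stochastic Lie algebra `𝔰(n,ℝ)`: real `n×n` matrices all of whose row sums vanish,
i.e. `A·𝟙 = 0`. -/
def sAlg (n : ℕ) : LieSubalgebra ℝ (Matrix (Fin n) (Fin n) ℝ) where
  carrier := {M | ∀ i, (∑ j, M i j) = 0}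
  add_mem' := by
    intro A B hA hB i
    simp [Matrix.add_apply, Finset.sum_add_distrib, hA i, hB i]
  zero_mem' := by intro i; simp
  smul_mem' := by
    intro c A hA i
    simp [Matrix.smul_apply, ← Finset.mul_sum, hA i]
  lie_mem' := by
    intro A B hA hB i
    have hrow : ∀ (X Y : Matrix (Fin n) (Fin n) ℝ), (∀ i, (∑ j, Y i j) = 0) →
        (∑ j, (X * Y) i j) = 0 := by
      intro X Y hY
      simp only [Matrix.mul_apply]
      rw [Finset.sum_comm]
      simp [← Finset.mul_sum, hY]
    rw [Ring.lie_def]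
    simp [Matrix.sub_apply, Finset.sum_sub_distrib, hrow A B hB, hrow B A hA]

lemma eigen_sep {L : Type*} [LieRing L] [LieAlgebra ℝ L]
    {ι : Type*} [DecidableEq ι] (S : LieSubalgebra ℝ L) (X : L) (hX : X ∈ S)
    (lam : ι → ℝ) :
    ∀ s : Finset ι, ∀ B : ι → L,
      (∀ i ∈ s, ⁅X, B i⁆ = lam i • B i) →
      (∀ i ∈ s, ∀ j ∈ s, lam i = lam j → i = j) →
      (∑ i ∈ s, B i) ∈ S → ∀ i ∈ s, B i ∈ S := by
  intro s
  induction s using Finset.strongInduction with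
  | _ s IH =>
    intro B hB hinj hsum i hi
    have hti : s.erase i ⊂ s := Finset.erase_ssubset hi
    set B' : ι → L := fun j => (lam j - lam i) • B j with hB'
    have hsum' : (∑ j ∈ s.erase i, B' j) ∈ S := by
      have h1 : ⁅X, ∑ j ∈ s, B j⁆ - lam i • ∑ j ∈ s, B j ∈ S :=
        S.sub_mem (S.lie_mem hX hsum) (S.smul_mem _ hsum)
      have h2 : ⁅X, ∑ j ∈ s, B j⁆ - lam i • ∑ j ∈ s, B j = ∑ j ∈ s.erase i, B' j := by
        have hls : ⁅X, ∑ j ∈ s, B j⁆ = ∑ j ∈ s, ⁅X, B j⁆ :=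
          map_sum (LieAlgebra.ad ℝ L X) _ _
        rw [hls, Finset.smul_sum, ← Finset.sum_sub_distrib]
        have h3 : ∀ j ∈ s, ⁅X, B j⁆ - lam i • B j = B' j := by
          intro j hj
          rw [hB j hj, hB', ← sub_smul]
        rw [Finset.sum_congr rfl h3]
        rw [← Finset.sum_erase s (show B' i = 0 by simp [hB'])]
      rwa [h2] at h1
    have hBel : ∀ j ∈ s.erase i, B' j ∈ S := by
      refine IH _ hti B' ?_ ?_ hsum'
      · intro j hj
        rw [hB']
        rw [lie_smul, hB j (Finset.mem_of_mem_erase hj), smul_comm]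
      · intro a ha b hb hab
        exact hinj a (Finset.mem_of_mem_erase ha) b (Finset.mem_of_mem_erase hb) hab
    have hBor : ∀ j ∈ s.erase i, B j ∈ S := by
      intro j hj
      have hne : lam j - lam i ≠ 0 := by
        intro h0
        exact (Finset.ne_of_mem_erase hj)
          (hinj j (Finset.mem_of_mem_erase hj) i hi (by linarith [sub_eq_zero.mp h0]))
      have := S.smul_mem (lam j - lam i)⁻¹ (hBel j hj)
      rwa [hB', smul_smul, inv_mul_cancel₀ hne, one_smul] at this
    have : B i = (∑ j ∈ s, B j) - ∑ j ∈ s.erase i, B j := by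
      rw [← Finset.sum_erase_add s _ hi]; abel
    rw [this]
    exact S.sub_mem hsum (Submodule.sum_mem _ hBor)

lemma pow4_pos (x : ℕ) : 0 < (4:ℕ)^x := Nat.pow_pos (by norm_num)

lemma pow4_lt (x z : ℕ) (h : (4:ℕ)^x < 4^z) : x < z :=
  (Nat.pow_lt_pow_iff_right (by norm_num)).mp h

lemma pow4_inj (x z : ℕ) (h : (4:ℕ)^x = 4^z) : x = z :=
  Nat.pow_right_injective (by norm_num) h

lemma pow4_ne (x y z : ℕ) : (4:ℕ)^x + 4^y ≠ 4^z := by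
  intro h
  rcases le_total x y with hxy | hxy
  · have h1 : (4:ℕ)^x ≤ 4^y := Nat.pow_le_pow_right (by norm_num) hxy
    have hyz : y < z := pow4_lt y z (by have := pow4_pos x; omega)
    have h2 : 4 * 4^y ≤ 4^z := by
      calc 4 * 4^y = 4^(y+1) := by ring
        _ ≤ 4^z := Nat.pow_le_pow_right (by norm_num) hyz
    have := pow4_pos x
    have := pow4_pos y
    omega
  · have h1 : (4:ℕ)^y ≤ 4^x := Nat.pow_le_pow_right (by norm_num) hxy
    have hyz : x < z := pow4_lt x z (by have := pow4_pos y; omega)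
    have h2 : 4 * 4^x ≤ 4^z := by
      calc 4 * 4^x = 4^(x+1) := by ring
        _ ≤ 4^z := Nat.pow_le_pow_right (by norm_num) hyz
    have := pow4_pos x
    have := pow4_pos y
    omega

lemma pow4_core (x y z w : ℕ) (hxy : x ≤ y) (hzw : z ≤ w)
    (h : (4:ℕ)^x + 4^y = 4^z + 4^w) : x = z ∧ y = w := by
  have hyw : y = w := by
    rcases lt_trichotomy y w with hlt | heq | hgt
    · exfalso
      have h1 : (4:ℕ)^x ≤ 4^y := Nat.pow_le_pow_right (by norm_num) hxy
      have h2 : 4 * 4^y ≤ 4^w := by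
        calc 4 * 4^y = 4^(y+1) := by ring
          _ ≤ 4^w := Nat.pow_le_pow_right (by norm_num) hlt
      have := pow4_pos z
      have := pow4_pos x
      have := pow4_pos y
      omega
    · exact heq
    · exfalso
      have h1 : (4:ℕ)^z ≤ 4^w := Nat.pow_le_pow_right (by norm_num) hzw
      have h2 : 4 * 4^w ≤ 4^y := by
        calc 4 * 4^w = 4^(w+1) := by ring
          _ ≤ 4^y := Nat.pow_le_pow_right (by norm_num) hgt
      have := pow4_pos x
      have := pow4_pos z
      have := pow4_pos w
      omega
  subst hyw
  have : (4:ℕ)^x = 4^z := by omega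
  exact ⟨pow4_inj _ _ this, rfl⟩

lemma pow4_sidon (x y z w : ℕ) (h : (4:ℕ)^x + 4^y = 4^z + 4^w) :
    (x = z ∧ y = w) ∨ (x = w ∧ y = z) := by
  rcases le_total x y with hxy | hxy <;> rcases le_total z w with hzw | hzw
  · exact Or.inl (pow4_core x y z w hxy hzw h)
  · have := pow4_core x y w z hxy hzw (by omega)
    exact Or.inr ⟨this.1, this.2⟩
  · have := pow4_core y x z w hxy hzw (by omega)
    exact Or.inr ⟨this.2, this.1⟩
  · have := pow4_core y x w z hxy hzw (by omega)
    exact Or.inl ⟨this.2, this.1⟩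

open Matrix Finset

namespace St18

noncomputable section

variable (m : ℕ)

def ell : Fin (m+2) := Fin.last (m+1)

def w (i : Fin (m+2)) : Fin (m+2) → ℝ :=
  fun a => if i = ell m then 1 else (if a = i then 1 else 0) - (if a = ell m then 1 else 0)

def ψ (j : Fin (m+2)) : Fin (m+2) → ℝ :=
  fun a => if j = ell m then 0 else (if a = j then 1 else 0) - 1/(m+2)

def ψ' (i : Fin (m+2)) : Fin (m+2) → ℝ :=
  fun a => if i = ell m then 1/(m+2) else (if a = i then 1 else 0) - 1/(m+2)

def d (i : Fin (m+2)) : ℝ := if i = ell m then 0 else (4:ℝ)^((i:ℕ)+1)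

def B (i j : Fin (m+2)) : Matrix (Fin (m+2)) (Fin (m+2)) ℝ :=
  Matrix.vecMulVec (w m i) (ψ m j)

lemma bio (j k : Fin (m+2)) :
    (ψ m j) ⬝ᵥ (w m k) = if j = k ∧ j ≠ ell m then 1 else 0 := by
  unfold dotProduct ψ w
  by_cases hj : j = ell m
  · simp [hj]
  · by_cases hk : k = ell m
    · have hjk : j ≠ k := by rw [hk]; exact hj
      simp only [hj, hk, if_true, if_false, mul_one, hjk, false_and]
      rw [Finset.sum_sub_distrib]
      simp only [Finset.sum_ite_eq', Finset.mem_univ, if_true, Finset.sum_const,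
        Finset.card_univ, Fintype.card_fin, nsmul_eq_mul]
      push_cast
      field_simp
      norm_num
    · simp only [hj, hk, if_false, hj, and_true, ne_eq, not_false_iff]
      have expand : ∀ a : Fin (m+2),
          ((if a = j then (1:ℝ) else 0) - 1/(m+2)) * ((if a = k then 1 else 0) - (if a = ell m then 1 else 0))
          = ((if a = j then (1:ℝ) else 0) * (if a = k then 1 else 0))
            - ((if a = j then (1:ℝ) else 0) * (if a = ell m then 1 else 0))
            - ((1/(m+2)) * (if a = k then 1 else 0))
            + ((1/(m+2)) * (if a = ell m then 1 else 0)) := by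
        intro a; ring
      rw [Finset.sum_congr rfl (fun a _ => expand a)]
      rw [Finset.sum_add_distrib, Finset.sum_sub_distrib, Finset.sum_sub_distrib]
      have e1 : ∑ a : Fin (m+2), (if a = j then (1:ℝ) else 0) * (if a = k then 1 else 0)
          = if j = k then 1 else 0 := by
        simp [ite_and, Finset.sum_ite_eq', eq_comm]
      have e2 : ∑ a : Fin (m+2), (if a = j then (1:ℝ) else 0) * (if a = ell m then 1 else 0)
          = 0 := by
        simp [ite_and, Finset.sum_ite_eq', eq_comm, hj]
      have e3 : ∑ a : Fin (m+2), (1/((m:ℝ)+2)) * (if a = k then 1 else 0) = 1/((m:ℝ)+2) := by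
        simp [← Finset.mul_sum, Finset.sum_ite_eq']
      have e4 : ∑ a : Fin (m+2), (1/((m:ℝ)+2)) * (if a = ell m then 1 else 0) = 1/((m:ℝ)+2) := by
        simp [← Finset.mul_sum, Finset.sum_ite_eq']
      push_cast at e1 e2 e3 e4 ⊢
      rw [e1, e2, e3, e4]
      ring

end

end St18

namespace St18
noncomputable section
variable (m : ℕ)

lemma vmv_mul (u v u' v' : Fin (m+2) → ℝ) :
    Matrix.vecMulVec u v * Matrix.vecMulVec u' v' = (v ⬝ᵥ u') • Matrix.vecMulVec u v' := by
  ext a b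
  simp only [Matrix.mul_apply, Matrix.vecMulVec_apply, Matrix.smul_apply, dotProduct,
    smul_eq_mul, Finset.sum_mul]
  exact Finset.sum_congr rfl (fun x _ => by ring)

lemma Bmul (i j k l : Fin (m+2)) :
    B m i j * B m k l = (if j = k ∧ j ≠ ell m then (1:ℝ) else 0) • B m i l := by
  rw [B, B, B, vmv_mul, bio]

def X : Matrix (Fin (m+2)) (Fin (m+2)) ℝ := ∑ i, d m i • B m i i

lemma XB (i j : Fin (m+2)) : X m * B m i j = d m i • B m i j := by
  rw [X, Finset.sum_mul]
  have h1 : ∀ k, (d m k • B m k k) * B m i j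
      = (d m k * (if k = i ∧ k ≠ ell m then 1 else 0)) • B m k j := by
    intro k; rw [smul_mul_assoc, Bmul, smul_smul]
  rw [Finset.sum_congr rfl (fun k _ => h1 k)]
  rw [Finset.sum_eq_single i]
  · by_cases hi : i = ell m
    · simp [hi, d]
    · simp [hi]
  · intro k _ hk; simp [hk]
  · intro h; exact absurd (Finset.mem_univ i) h

lemma BX (i j : Fin (m+2)) : B m i j * X m = d m j • B m i j := by
  rw [X, Finset.mul_sum]
  have h1 : ∀ k, B m i j * (d m k • B m k k)
      = (d m k * (if j = k ∧ j ≠ ell m then 1 else 0)) • B m i k := by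
    intro k; rw [mul_smul_comm, Bmul, smul_smul]
  rw [Finset.sum_congr rfl (fun k _ => h1 k)]
  rw [Finset.sum_eq_single j]
  · by_cases hj : j = ell m
    · simp [hj, d]
    · simp [hj]
  · intro k _ hk; simp [Ne.symm hk]
  · intro h; exact absurd (Finset.mem_univ j) h

lemma lieXB (i j : Fin (m+2)) : ⁅X m, B m i j⁆ = (d m i - d m j) • B m i j := by
  rw [Ring.lie_def, XB, BX, sub_smul]

lemma lieBB (i j : Fin (m+2)) (hi : i ≠ ell m) (hj : j ≠ ell m) (hij : i ≠ j) :
    ⁅B m i j, B m j i⁆ = B m i i - B m j j := by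
  rw [Ring.lie_def, Bmul, Bmul]
  simp [hi, hj]

lemma sum_psi (j : Fin (m+2)) : ∑ b, ψ m j b = 0 := by
  unfold ψ
  by_cases hj : j = ell m
  · simp [hj]
  · simp only [hj, if_false]
    rw [Finset.sum_sub_distrib]
    simp only [Finset.sum_ite_eq', Finset.mem_univ, if_true, Finset.sum_const,
      Finset.card_univ, Fintype.card_fin, nsmul_eq_mul]
    push_cast
    field_simp
    norm_num

lemma B_row (i j : Fin (m+2)) : ∀ a, ∑ b, B m i j a b = 0 := by
  intro a
  unfold B
  simp only [Matrix.vecMulVec_apply, ← Finset.mul_sum, sum_psi, mul_zero]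

end
end St18

namespace St18
noncomputable section
variable (m : ℕ)

def g (i : Fin (m+2)) : ℕ := if i = ell m then 0 else 4^((i:ℕ)+1)

lemma d_eq (i : Fin (m+2)) : d m i = (g m i : ℝ) := by
  unfold d g
  by_cases hi : i = ell m <;> simp [hi]

lemma fin_succ_inj {a b : Fin (m+2)} (h : (a:ℕ)+1 = (b:ℕ)+1) : a = b :=
  Fin.val_injective (Nat.succ_injective h)

lemma g_sidon (a b c e : Fin (m+2)) (h : g m a + g m b = g m c + g m e) :
    (a = c ∧ b = e) ∨ (a = e ∧ b = c) := by
  unfold g at h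
  by_cases ha : a = ell m <;> by_cases hb : b = ell m <;>
    by_cases hc : c = ell m <;> by_cases he : e = ell m <;>
    simp only [ha, hb, hc, he, eq_self_iff_true, if_true, if_false, zero_add, add_zero] at h
  · exact Or.inl ⟨ha.trans hc.symm, hb.trans he.symm⟩
  · exact absurd h.symm (pow4_pos _).ne'
  · exact absurd h.symm (pow4_pos _).ne'
  · exfalso; have := pow4_pos ((c:ℕ)+1); have := pow4_pos ((e:ℕ)+1); omega
  · exact absurd h (pow4_pos _).ne'
  · exact Or.inl ⟨ha.trans hc.symm, fin_succ_inj m (pow4_inj _ _ h)⟩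
  · exact Or.inr ⟨ha.trans he.symm, fin_succ_inj m (pow4_inj _ _ h)⟩
  · exact absurd h.symm (pow4_ne _ _ _)
  · exact absurd h (pow4_pos _).ne'
  · exact Or.inr ⟨fin_succ_inj m (pow4_inj _ _ h), hb.trans hc.symm⟩
  · exact Or.inl ⟨fin_succ_inj m (pow4_inj _ _ h), hb.trans he.symm⟩
  · exact absurd h.symm (pow4_ne _ _ _)
  · exfalso; have := pow4_pos ((a:ℕ)+1); have := pow4_pos ((b:ℕ)+1); omega
  · exact absurd h (pow4_ne _ _ _)
  · exact absurd h (pow4_ne _ _ _)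
  · rcases pow4_sidon _ _ _ _ h with ⟨h1, h2⟩ | ⟨h1, h2⟩
    · exact Or.inl ⟨fin_succ_inj m h1, fin_succ_inj m h2⟩
    · exact Or.inr ⟨fin_succ_inj m h1, fin_succ_inj m h2⟩

lemma zero_ne_ell : (0 : Fin (m+2)) ≠ ell m := by
  simp [ell, Fin.ext_iff]

def Y0 : Matrix (Fin (m+2)) (Fin (m+2)) ℝ := ∑ i, B m i i

def sIdx : Finset (Fin (m+2) × Fin (m+2)) :=
  Finset.univ.filter (fun p => p.2 ≠ ell m ∧ (p.1 ≠ p.2 ∨ p.1 = 0))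

def Bp (p : Fin (m+2) × Fin (m+2)) : Matrix (Fin (m+2)) (Fin (m+2)) ℝ :=
  if p.1 = p.2 then Y0 m else B m p.1 p.2

def Y : Matrix (Fin (m+2)) (Fin (m+2)) ℝ := ∑ p ∈ sIdx m, Bp m p

lemma mem_sIdx (p : Fin (m+2) × Fin (m+2)) :
    p ∈ sIdx m ↔ p.2 ≠ ell m ∧ (p.1 ≠ p.2 ∨ p.1 = 0) := by
  simp [sIdx]

lemma lam_inj : ∀ p ∈ sIdx m, ∀ q ∈ sIdx m,
    d m p.1 - d m p.2 = d m q.1 - d m q.2 → p = q := by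
  intro p hp q hq h
  have h2 : d m p.1 + d m q.2 = d m q.1 + d m p.2 := by linarith
  rw [d_eq, d_eq, d_eq, d_eq] at h2
  have h3 : g m p.1 + g m q.2 = g m q.1 + g m p.2 := by exact_mod_cast h2
  rcases g_sidon m _ _ _ _ h3 with ⟨e1, e2⟩ | ⟨e1, e2⟩
  · exact Prod.ext e1 e2.symm
  · -- p.1 = p.2 and q.2 = q.1 : both are diagonal, hence both equal (0,0)
    rw [mem_sIdx] at hp hq
    have hp0 : p.1 = 0 := hp.2.resolve_left (by simp [e1])
    have hq0 : q.1 = 0 := hq.2.resolve_left (by simp [e2.symm])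
    have : p = q := by
      apply Prod.ext
      · rw [hp0, hq0]
      · rw [← e1, e2, hp0, hq0]
    exact this

lemma psi_ell : ψ m (ell m) = 0 := by
  funext a; simp [ψ]

lemma B_ell (i : Fin (m+2)) : B m i (ell m) = 0 := by
  unfold B
  rw [psi_ell]
  ext a b
  simp [Matrix.vecMulVec_apply]

lemma lieXY0 : ⁅X m, Y0 m⁆ = 0 := by
  rw [Y0]
  rw [show ⁅X m, ∑ i, B m i i⁆ = ∑ i, ⁅X m, B m i i⁆ from
    map_sum (LieAlgebra.ad ℝ _ (X m)) _ _]
  simp [lieXB]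

lemma B_mem_sAlg (i j : Fin (m+2)) : B m i j ∈ sAlg (m+2) :=
  B_row m i j

def S : LieSubalgebra ℝ (Matrix (Fin (m+2)) (Fin (m+2)) ℝ) :=
  LieSubalgebra.lieSpan ℝ _ {X m, Y m}

lemma X_mem_S : X m ∈ S m :=
  LieSubalgebra.subset_lieSpan (Set.mem_insert _ _)

lemma Y_mem_S : Y m ∈ S m :=
  LieSubalgebra.subset_lieSpan (by simp)

lemma Bp_mem : ∀ p ∈ sIdx m, Bp m p ∈ S m := by
  refine eigen_sep (S m) (X m) (X_mem_S m) (fun p => d m p.1 - d m p.2) (sIdx m) (Bp m)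
    ?_ (lam_inj m) ?_
  · intro p hp
    by_cases hd : p.1 = p.2
    · rw [Bp, if_pos hd, lieXY0]
      show (0 : Matrix _ _ ℝ) = (d m p.1 - d m p.2) • Y0 m
      rw [hd, sub_self, zero_smul]
    · rw [Bp, if_neg hd, lieXB]
  · exact Y_mem_S m

lemma B_offdiag_mem (i j : Fin (m+2)) (hj : j ≠ ell m) (hij : i ≠ j) : B m i j ∈ S m := by
  have h := Bp_mem m (i, j) ((mem_sIdx m _).mpr ⟨hj, Or.inl hij⟩)
  simpa [Bp, hij] using h

lemma Y0_mem : Y0 m ∈ S m := by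
  have h := Bp_mem m (0, 0) ((mem_sIdx m _).mpr ⟨zero_ne_ell m, Or.inr rfl⟩)
  simpa [Bp] using h

lemma B_diag_mem (i : Fin (m+2)) : B m i i ∈ S m := by
  by_cases hi : i = ell m
  · rw [hi, B_ell]; exact (S m).zero_mem
  · have hdiff : ∀ k, k ≠ ell m → B m i i - B m k k ∈ S m := by
      intro k hk
      by_cases hik : i = k
      · rw [hik, sub_self]; exact (S m).zero_mem
      · rw [← lieBB m i k hi hk hik]
        exact (S m).lie_mem (B_offdiag_mem m i k hk hik)
          (B_offdiag_mem m k i hi (Ne.symm hik))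
    have hsum2 : ∑ k ∈ Finset.univ.erase (ell m), B m k k = Y0 m := by
      rw [Y0, ← Finset.sum_erase_add _ _ (Finset.mem_univ (ell m)), B_ell, add_zero]
    have key : ((m:ℝ)+1) • B m i i
        = Y0 m + ∑ k ∈ Finset.univ.erase (ell m), (B m i i - B m k k) := by
      rw [Finset.sum_sub_distrib, hsum2, Finset.sum_const]
      rw [Finset.card_erase_of_mem (Finset.mem_univ _), Finset.card_univ, Fintype.card_fin]
      have hns : (m + 2 - 1) • B m i i = ((m:ℝ)+1) • B m i i := by
        rw [show m+2-1 = m+1 from rfl, ← Nat.cast_smul_eq_nsmul ℝ]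
        norm_num
      rw [hns]; abel
    have hmem : ((m:ℝ)+1) • B m i i ∈ S m :=
      key ▸ (S m).add_mem (Y0_mem m)
        (Submodule.sum_mem _ fun k hk => hdiff k (Finset.ne_of_mem_erase hk))
    have h2 := (S m).smul_mem ((m:ℝ)+1)⁻¹ hmem
    rwa [smul_smul, inv_mul_cancel₀ (by positivity), one_smul] at h2

lemma B_mem (i j : Fin (m+2)) : B m i j ∈ S m := by
  by_cases hj : j = ell m
  · rw [hj, B_ell]; exact (S m).zero_mem
  · by_cases hij : i = j
    · rw [hij]; exact B_diag_mem m j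
    · exact B_offdiag_mem m i j hj hij

lemma sum_w (j : Fin (m+2)) : ∑ a, w m j a = if j = ell m then ((m:ℝ)+2) else 0 := by
  unfold w
  by_cases hj : j = ell m
  · simp [hj]
  · simp only [hj, if_false]
    rw [Finset.sum_sub_distrib]
    simp [Finset.sum_ite_eq']

def P : Matrix (Fin (m+2)) (Fin (m+2)) ℝ := Matrix.of fun a k => w m k a

def Q : Matrix (Fin (m+2)) (Fin (m+2)) ℝ := Matrix.of fun k a => ψ' m k a

lemma psi'_eq (k : Fin (m+2)) (hk : k ≠ ell m) : ψ' m k = ψ m k := by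
  funext a; simp [ψ', ψ, hk]

lemma QP : Q m * P m = 1 := by
  ext k j
  rw [Matrix.mul_apply]
  by_cases hk : k = ell m
  · have h1 : ∀ a, Q m k a * P m a j = (1/((m:ℝ)+2)) * w m j a := by
      intro a; simp [Q, P, ψ', hk]
    rw [Finset.sum_congr rfl (fun a _ => h1 a), ← Finset.mul_sum, sum_w]
    by_cases hj : j = ell m
    · rw [if_pos hj, Matrix.one_apply, if_pos (hk.trans hj.symm)]
      field_simp
    · rw [if_neg hj, Matrix.one_apply, if_neg (by rw [hk]; exact fun h => hj h.symm), mul_zero]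
  · have h1 : ∀ a, Q m k a * P m a j = ψ m k a * w m j a := by
      intro a; rw [Q, P, Matrix.of_apply, Matrix.of_apply, psi'_eq m k hk]
    rw [Finset.sum_congr rfl (fun a _ => h1 a)]
    rw [show ∑ a, ψ m k a * w m j a = (ψ m k) ⬝ᵥ (w m j) from rfl, bio]
    rw [Matrix.one_apply]
    simp [hk]

lemma PQ : P m * Q m = 1 := mul_eq_one_comm.mp (QP m)

lemma expand (v : Fin (m+2) → ℝ) (a : Fin (m+2)) :
    ∑ i, ((ψ' m i) ⬝ᵥ v) * w m i a = v a := by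
  calc ∑ i, ((ψ' m i) ⬝ᵥ v) * w m i a
      = ∑ i, ∑ b, ψ' m i b * v b * w m i a := by
        refine Finset.sum_congr rfl fun i _ => ?_
        rw [dotProduct, Finset.sum_mul]
    _ = ∑ b, ∑ i, ψ' m i b * v b * w m i a := Finset.sum_comm
    _ = ∑ b, (∑ i, w m i a * ψ' m i b) * v b := by
        refine Finset.sum_congr rfl fun b _ => ?_
        rw [Finset.sum_mul]
        exact Finset.sum_congr rfl fun i _ => by ring
    _ = ∑ b, (P m * Q m) a b * v b := by
        refine Finset.sum_congr rfl fun b _ => ?_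
        rw [Matrix.mul_apply]
        rfl
    _ = v a := by rw [PQ]; simp [Matrix.one_apply]

lemma vmv_mulVec (u v x : Fin (m+2) → ℝ) :
    Matrix.vecMulVec u v *ᵥ x = (v ⬝ᵥ x) • u := by
  funext a
  simp only [Matrix.mulVec, dotProduct, Matrix.vecMulVec_apply, Pi.smul_apply,
    smul_eq_mul, Finset.sum_mul]
  exact Finset.sum_congr rfl fun b _ => by ring

lemma sum_mulVec {ι : Type*} (s : Finset ι) (f : ι → Matrix (Fin (m+2)) (Fin (m+2)) ℝ)
    (x : Fin (m+2) → ℝ) : (∑ i ∈ s, f i) *ᵥ x = ∑ i ∈ s, f i *ᵥ x := by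
  funext a
  simp only [Matrix.mulVec, dotProduct, Finset.sum_apply, Matrix.sum_apply,
    Finset.sum_mul]
  rw [Finset.sum_comm]

lemma span_ge : ∀ M ∈ sAlg (m+2), M ∈ S m := by
  intro M hM
  have hMrow : ∀ a, ∑ b, M a b = 0 := hM
  set c : Fin (m+2) → Fin (m+2) → ℝ := fun i j => (ψ' m i) ⬝ᵥ (M *ᵥ w m j) with hc
  set N : Matrix (Fin (m+2)) (Fin (m+2)) ℝ := ∑ i, ∑ j, c i j • B m i j with hN
  have hNmem : N ∈ S m := Submodule.sum_mem _ fun i _ =>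
    Submodule.sum_mem _ fun j _ => (S m).smul_mem _ (B_mem m i j)
  suffices hMN : M = N by rw [hMN]; exact hNmem
  have hcol : ∀ (Z : Matrix (Fin (m+2)) (Fin (m+2)) ℝ) a k, (Z * P m) a k = (Z *ᵥ w m k) a := by
    intro Z a k
    simp [Matrix.mul_apply, Matrix.mulVec, dotProduct, P]
  have hNv : ∀ k, N *ᵥ w m k = M *ᵥ w m k := by
    intro k
    have h1 : N *ᵥ w m k = ∑ i, ∑ j, (c i j * ((ψ m j) ⬝ᵥ (w m k))) • w m i := by
      rw [hN, sum_mulVec]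
      refine Finset.sum_congr rfl fun i _ => ?_
      rw [sum_mulVec]
      refine Finset.sum_congr rfl fun j _ => ?_
      rw [Matrix.smul_mulVec, B, vmv_mulVec, smul_smul]
    by_cases hk : k = ell m
    · have h2 : N *ᵥ w m k = 0 := by
        rw [h1]
        refine Finset.sum_eq_zero fun i _ => Finset.sum_eq_zero fun j _ => ?_
        rw [bio]
        rcases eq_or_ne j k with hjk | hjk
        · rw [if_neg (by rw [hjk, hk]; simp), mul_zero, zero_smul]
        · rw [if_neg (by simp [hjk]), mul_zero, zero_smul]
      have h3 : M *ᵥ w m k = 0 := by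
        funext a
        have : ∀ b, w m k b = 1 := by intro b; simp [w, hk]
        simp only [Matrix.mulVec, dotProduct]
        rw [Finset.sum_congr rfl fun b _ => by rw [this b, mul_one]]
        exact hMrow a
      rw [h2, h3]
    · have h2 : N *ᵥ w m k = ∑ i, c i k • w m i := by
        rw [h1]
        refine Finset.sum_congr rfl fun i _ => ?_
        rw [Finset.sum_eq_single k]
        · rw [bio, if_pos ⟨rfl, hk⟩, mul_one]
        · intro j _ hjk
          rw [bio, if_neg (by simp [hjk]), mul_zero, zero_smul]
        · intro h; exact absurd (Finset.mem_univ k) h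
      rw [h2]
      funext a
      rw [Finset.sum_apply]
      have h4 : ∀ i, (c i k • w m i) a = ((ψ' m i) ⬝ᵥ (M *ᵥ w m k)) * w m i a := by
        intro i; simp [hc]
      rw [Finset.sum_congr rfl fun i _ => h4 i]
      exact expand m (M *ᵥ w m k) a
  have hMP : M * P m = N * P m := by
    ext a k
    rw [hcol, hcol, hNv]
  calc M = M * (P m * Q m) := by rw [PQ, mul_one]
    _ = (M * P m) * Q m := by rw [mul_assoc]
    _ = (N * P m) * Q m := by rw [hMP]
    _ = N * (P m * Q m) := by rw [mul_assoc]
    _ = N := by rw [PQ, mul_one]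

lemma X_mem_sAlg : X m ∈ sAlg (m+2) :=
  Submodule.sum_mem _ fun i _ => (sAlg (m+2)).smul_mem _ (B_mem_sAlg m i i)

lemma Y0_mem_sAlg : Y0 m ∈ sAlg (m+2) :=
  Submodule.sum_mem _ fun i _ => B_mem_sAlg m i i

lemma Y_mem_sAlg : Y m ∈ sAlg (m+2) := by
  refine Submodule.sum_mem _ fun p _ => ?_
  by_cases hd : p.1 = p.2
  · rw [Bp, if_pos hd]; exact Y0_mem_sAlg m
  · rw [Bp, if_neg hd]; exact B_mem_sAlg m p.1 p.2

lemma span_eq : S m = sAlg (m+2) := by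
  apply le_antisymm
  · rw [S, LieSubalgebra.lieSpan_le]
    rintro Z hZ
    rcases hZ with rfl | hZ
    · exact X_mem_sAlg m
    · rw [Set.mem_singleton_iff] at hZ
      rw [hZ]
      exact Y_mem_sAlg m
  · exact span_ge m

end
end St18

/-- The stochastic Lie algebra `𝔰(n,ℝ)` is generated, as a Lie algebra,
by two of its elements. -/
theorem stmt18 (n : ℕ) (hn : 2 ≤ n) :
    ∃ X Y : Matrix (Fin n) (Fin n) ℝ, X ∈ sAlg n ∧ Y ∈ sAlg n ∧
      LieSubalgebra.lieSpan ℝ (Matrix (Fin n) (Fin n) ℝ) {X, Y} = sAlg n := by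
  obtain ⟨m, rfl⟩ : ∃ m, n = m + 2 := ⟨n - 2, by omega⟩
  exact ⟨St18.X m, St18.Y m, St18.X_mem_sAlg m, St18.Y_mem_sAlg m, St18.span_eq m⟩
end

section
/- Let M be the orthogonal n×n matrix whose columns are v₀, v₁, …, v_{n−1}. Then the linear map S ↦ Mᵀ S M is a Lie algebra isomorphism from the stochastic Lie algebra 𝔰(n,ℝ) onto the Lie subalgebra 𝔞 of gl(n,ℝ) consisting of all real n×n matrices whose first column is zero; in particular, for every S with S𝟙 = 0 the matrix MᵀSM has zero first column, the map is bijective from 𝔰(n,ℝ) onto 𝔞, and it preserves the commutator. -/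
open Matrix Finset

attribute [local instance] LieRing.ofAssociativeRing

/-- The Lie subalgebra `𝔞` of `gl(n,ℝ)` of matrices whose first column is zero. -/
def aAlg (n : ℕ) : LieSubalgebra ℝ (Matrix (Fin n) (Fin n) ℝ) where
  carrier := {M | ∀ (i : Fin n) (j : Fin n), (j : ℕ) = 0 → M i j = 0}
  add_mem' := by
    intro A B hA hB i j hj
    simp [Matrix.add_apply, hA i j hj, hB i j hj]
  zero_mem' := by intro i j hj; simp
  smul_mem' := by
    intro c A hA i j hj
    simp [Matrix.smul_apply, hA i j hj]
  lie_mem' := by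
    intro A B hA hB i j hj
    have key : ∀ X Y : Matrix (Fin n) (Fin n) ℝ, (∀ (i : Fin n) (j : Fin n), (j : ℕ) = 0 → Y i j = 0) →
        (X * Y) i j = 0 := by
      intro X Y hY
      simp only [Matrix.mul_apply]
      exact Finset.sum_eq_zero fun k _ => by rw [hY k j hj, mul_zero]
    rw [Ring.lie_def]
    simp [Matrix.sub_apply, key A B hB, key B A hA]

set_option maxHeartbeats 2000000 in
/-- Let `M` be the orthogonal matrix whose columns are `v₀, v₁, …, v_{n−1}`.
Then `S ↦ Mᵀ S M` is a Lie algebra isomorphism from the stochastic Lie algebra `𝔰(n,ℝ)` onto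
the Lie subalgebra `𝔞` of matrices with zero first column: there is a Lie algebra equivalence
`e : 𝔰(n,ℝ) ≃ 𝔞` acting by `S ↦ Mᵀ S M`. -/
theorem stmt19 (n : ℕ) (hn : 2 ≤ n)
    (v : ℕ → Fin n → ℝ)
    (hv0 : ∀ k, v 0 k = 1 / Real.sqrt n)
    (horth : ∀ i, i < n → ∀ j, j < n → (∑ k, v i k * v j k) = if i = j then (1 : ℝ) else 0)
    (hplane : ∀ i, 1 ≤ i → i < n → (∑ k, v i k) = 0)
    (M : Matrix (Fin n) (Fin n) ℝ)
    (hM : ∀ i j, M i j = v (j : ℕ) i) :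
    ∃ e : sAlg n ≃ₗ⁅ℝ⁆ aAlg n,
      ∀ X : sAlg n, ((e X : Matrix (Fin n) (Fin n) ℝ)) = Mᵀ * (X : Matrix (Fin n) (Fin n) ℝ) * M := by
  -- orthogonality of M
  have h1 : Mᵀ * M = 1 := by
    ext i j
    simp only [Matrix.mul_apply, Matrix.transpose_apply, Matrix.one_apply, hM]
    rw [horth i i.isLt j j.isLt]
    simp [Fin.ext_iff]
  have h2 : M * Mᵀ = 1 := mul_eq_one_comm.mp h1
  -- forward membership
  have hmem1 : ∀ S : Matrix (Fin n) (Fin n) ℝ, S ∈ sAlg n → Mᵀ * S * M ∈ aAlg n := by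
    intro S hS i j hj
    have hSrow : ∀ k, (∑ l, S k l) = 0 := hS
    simp only [Matrix.mul_apply, Matrix.transpose_apply]
    have : ∀ l, (∑ k, M k i * S k l) * M l j = (∑ k, M k i * S k l) * (1 / Real.sqrt n) := by
      intro l
      rw [hM l j, hj, hv0 l]
    rw [Finset.sum_congr rfl (fun l _ => this l)]
    rw [← Finset.sum_mul]
    rw [Finset.sum_comm]
    have : ∀ k, (∑ l, M k i * S k l) = 0 := by
      intro k
      rw [← Finset.mul_sum, hSrow k, mul_zero]
    rw [Finset.sum_congr rfl (fun k _ => this k), Finset.sum_const, smul_zero, zero_mul]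
  -- backward membership
  have hmem2 : ∀ A : Matrix (Fin n) (Fin n) ℝ, A ∈ aAlg n → M * A * Mᵀ ∈ sAlg n := by
    intro A hA i
    simp only [Matrix.mul_apply, Matrix.transpose_apply]
    rw [Finset.sum_comm]
    apply Finset.sum_eq_zero
    intro l _
    by_cases hl : (l : ℕ) = 0
    · apply Finset.sum_eq_zero
      intro j _
      rw [Finset.sum_eq_zero, zero_mul]
      intro k _
      rw [hA k l hl, mul_zero]
    · have : ∀ j, (∑ k, M i k * A k l) * M j l = (∑ k, M i k * A k l) * v (l : ℕ) j := by
        intro j; rw [hM j l]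
      rw [Finset.sum_congr rfl (fun j _ => this j), ← Finset.mul_sum,
        hplane (l : ℕ) (Nat.one_le_iff_ne_zero.mpr hl) l.isLt, mul_zero]
  -- multiplicativity-style cancellation lemmas
  have comp : ∀ X Y : Matrix (Fin n) (Fin n) ℝ,
      (Mᵀ * X * M) * (Mᵀ * Y * M) = Mᵀ * (X * Y) * M := by
    intro X Y
    calc (Mᵀ * X * M) * (Mᵀ * Y * M) = Mᵀ * X * (M * Mᵀ) * Y * M := by
            simp only [Matrix.mul_assoc]
      _ = Mᵀ * (X * Y) * M := by rw [h2, Matrix.mul_one]; simp only [Matrix.mul_assoc]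
  have cancel1 : ∀ X : Matrix (Fin n) (Fin n) ℝ, M * (Mᵀ * X * M) * Mᵀ = X := by
    intro X
    calc M * (Mᵀ * X * M) * Mᵀ = (M * Mᵀ) * X * (M * Mᵀ) := by simp only [Matrix.mul_assoc]
      _ = X := by rw [h2, Matrix.one_mul, Matrix.mul_one]
  have cancel2 : ∀ X : Matrix (Fin n) (Fin n) ℝ, Mᵀ * (M * X * Mᵀ) * M = X := by
    intro X
    calc Mᵀ * (M * X * Mᵀ) * M = (Mᵀ * M) * X * (Mᵀ * M) := by simp only [Matrix.mul_assoc]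
      _ = X := by rw [h1, Matrix.one_mul, Matrix.mul_one]
  refine ⟨{ toFun := fun X => ⟨Mᵀ * (X : Matrix (Fin n) (Fin n) ℝ) * M, hmem1 _ X.2⟩
            map_add' := fun X Y => Subtype.ext (by
              show Mᵀ * (↑X + ↑Y) * M = Mᵀ * (X : Matrix (Fin n) (Fin n) ℝ) * M + Mᵀ * (Y : Matrix (Fin n) (Fin n) ℝ) * M
              rw [Matrix.mul_add, Matrix.add_mul])
            map_smul' := fun c X => Subtype.ext (by
              show Mᵀ * (c • (X : Matrix (Fin n) (Fin n) ℝ)) * M = c • (Mᵀ * (X : Matrix (Fin n) (Fin n) ℝ) * M)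
              rw [Matrix.mul_smul, Matrix.smul_mul])
            map_lie' := by
              intro X Y
              apply Subtype.ext
              show Mᵀ * ⁅(X : Matrix (Fin n) (Fin n) ℝ), (Y : Matrix (Fin n) (Fin n) ℝ)⁆ * M = ⁅Mᵀ * (X : Matrix (Fin n) (Fin n) ℝ) * M, Mᵀ * (Y : Matrix (Fin n) (Fin n) ℝ) * M⁆
              simp only [Ring.lie_def, Matrix.mul_sub, Matrix.sub_mul, comp]
            invFun := fun A => ⟨M * (A : Matrix (Fin n) (Fin n) ℝ) * Mᵀ, hmem2 _ A.2⟩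
            left_inv := fun X => Subtype.ext (cancel1 _)
            right_inv := fun A => Subtype.ext (cancel2 _) }, fun X => rfl⟩
end
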